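/- The reachability gramian and controllability gramian satisfy ℛ(t₀, t) = −𝒞(t, t₀) and χ(t, t₀) 𝒞(t₀, t) χ(t, t₀)ᵀ = −𝒞(t, t₀) for all t₀, t ∈ D; consequently 𝒞(t₀, t), 𝒞(t, t₀), ℛ(t₀, t), ℛ(t, t₀) all have the same rank. -/

import Mathlib

open Matrix MeasureTheory

attribute [local instance] Matrix.normedAddCommGroup Matrix.normedSpace

noncomputable section

/-- `χ` is the fundamental matrix of the system `∂X/∂t^α = M_α(t) X` on `D`. -/
def IsFundamentalMatrix {m n : ℕ} (D : Set (Fin m → ℝ))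
    (M : Fin m → (Fin m → ℝ) → Matrix (Fin n) (Fin n) ℝ)
    (χ : (Fin m → ℝ) → (Fin m → ℝ) → Matrix (Fin n) (Fin n) ℝ) : Prop :=
  ∀ t₀ ∈ D, χ t₀ t₀ = 1 ∧
    ∀ t ∈ D, DifferentiableAt ℝ (fun s => χ s t₀) t ∧
      ∀ α, fderiv ℝ (fun s => χ s t₀) t (Pi.single α 1) = M α t * χ t t₀

/-- The segment from `t₀` to `t`, parametrized on `[0,1]`. -/
def seg {m : ℕ} (t₀ t : Fin m → ℝ) (τ : ℝ) : Fin m → ℝ := t₀ + τ • (t - t₀)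

/-- The controllability gramian
`𝒞(t₀,t) = ∫_{γ_{t₀,t}} χ(t₀,s) N_α(s) N_αᵀ(s) χ(t₀,s)ᵀ ds^α`, computed along the
segment from `t₀` to `t` (by path independence this is the general value). -/
def ctrlGramian {m n k : ℕ}
    (χ : (Fin m → ℝ) → (Fin m → ℝ) → Matrix (Fin n) (Fin n) ℝ)
    (N : Fin m → (Fin m → ℝ) → Matrix (Fin n) (Fin k) ℝ)
    (t₀ t : Fin m → ℝ) : Matrix (Fin n) (Fin n) ℝ :=
  fun i j => ∫ τ in (0:ℝ)..1, ∑ α, (t α - t₀ α) *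
    (χ t₀ (seg t₀ t τ) * N α (seg t₀ t τ) * (N α (seg t₀ t τ))ᵀ
      * (χ t₀ (seg t₀ t τ))ᵀ) i j

/-- The reachability gramian
`ℛ(t₀,t) = ∫_{γ_{t₀,t}} χ(t,s) N_α(s) N_αᵀ(s) χ(t,s)ᵀ ds^α`. -/
def reachGramian {m n k : ℕ}
    (χ : (Fin m → ℝ) → (Fin m → ℝ) → Matrix (Fin n) (Fin n) ℝ)
    (N : Fin m → (Fin m → ℝ) → Matrix (Fin n) (Fin k) ℝ)
    (t₀ t : Fin m → ℝ) : Matrix (Fin n) (Fin n) ℝ :=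
  fun i j => ∫ τ in (0:ℝ)..1, ∑ α, (t α - t₀ α) *
    (χ t (seg t₀ t τ) * N α (seg t₀ t τ) * (N α (seg t₀ t τ))ᵀ
      * (χ t (seg t₀ t τ))ᵀ) i j

/-! ### Auxiliary lemmas -/

lemma my_norm_mul_le {n : ℕ} (B Z : Matrix (Fin n) (Fin n) ℝ) : ‖B * Z‖ ≤ n * ‖B‖ * ‖Z‖ := by
  have h0 : (0:ℝ) ≤ n * ‖B‖ * ‖Z‖ := by positivity
  rw [Matrix.norm_le_iff h0]
  intro i j
  calc ‖(B*Z) i j‖ = |∑ l, B i l * Z l j| := by rw [Matrix.mul_apply]; exact Real.norm_eq_abs _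
    _ ≤ ∑ l, |B i l * Z l j| := Finset.abs_sum_le_sum_abs _ _
    _ ≤ ∑ _l : Fin n, ‖B‖ * ‖Z‖ := Finset.sum_le_sum fun l _ => by
        rw [abs_mul]
        exact mul_le_mul (B.norm_entry_le_entrywise_sup_norm) (Z.norm_entry_le_entrywise_sup_norm)
          (abs_nonneg _) (norm_nonneg _)
    _ = n * ‖B‖ * ‖Z‖ := by simp [Finset.sum_const, mul_assoc]

lemma pi_single_sum {m : ℕ} (v : Fin m → ℝ) : ∑ α, v α • (Pi.single α 1 : Fin m → ℝ) = v := by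
  funext j
  simp [Pi.single_apply, Finset.sum_apply]

instance matENormedAddMonoid {p q : ℕ} : ENormedAddMonoid (Matrix (Fin p) (Fin q) ℝ) :=
  NormedAddGroup.toENormedAddMonoid

def entryCLM {n : ℕ} (i j : Fin n) : Matrix (Fin n) (Fin n) ℝ →L[ℝ] ℝ :=
  LinearMap.toContinuousLinearMap
    { toFun := fun X => X i j, map_add' := fun _ _ => rfl, map_smul' := fun _ _ => rfl }

lemma integral_entry {n : ℕ} {G : ℝ → Matrix (Fin n) (Fin n) ℝ}
    (hG : IntervalIntegrable G volume 0 1) (i j : Fin n) :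
    (∫ τ in (0:ℝ)..1, G τ) i j = ∫ τ in (0:ℝ)..1, G τ i j :=
  ((entryCLM i j).intervalIntegral_comp_comm hG).symm

lemma rank_neg' {n : ℕ} (B : Matrix (Fin n) (Fin n) ℝ) : (-B).rank = B.rank := by
  rw [← neg_one_mul]
  exact Matrix.rank_mul_eq_right_of_isUnit_det (-1) B (by simp [Matrix.det_neg])

lemma seg_mem_D {m : ℕ} {D : Set (Fin m → ℝ)} (hconv : Convex ℝ D) {a b : Fin m → ℝ}
    (ha : a ∈ D) (hb : b ∈ D) {τ : ℝ} (hτ : τ ∈ Set.Icc (0:ℝ) 1) : seg a b τ ∈ D := by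
  have := hconv ha hb (by linarith [hτ.2] : (0:ℝ) ≤ 1 - τ) hτ.1 (by ring)
  convert this using 1
  funext j
  simp [seg]
  ring

lemma seg_zero {m : ℕ} (a b : Fin m → ℝ) : seg a b 0 = a := by funext j; simp [seg]

lemma seg_one {m : ℕ} (a b : Fin m → ℝ) : seg a b 1 = b := by funext j; simp [seg]

lemma seg_symm {m : ℕ} (a b : Fin m → ℝ) (τ : ℝ) : seg b a (1 - τ) = seg a b τ := by
  funext j; simp [seg]; ring

lemma continuous_seg {m : ℕ} (a b : Fin m → ℝ) : Continuous (seg a b) := by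
  unfold seg; fun_prop

lemma hasDerivAt_seg {m : ℕ} (a b : Fin m → ℝ) (τ : ℝ) : HasDerivAt (seg a b) (b - a) τ := by
  have h : HasDerivAt (fun τ : ℝ => τ • (b - a)) ((1:ℝ) • (b - a)) τ :=
    (hasDerivAt_id τ).smul_const (b - a)
  have h' := h.const_add a
  rw [one_smul] at h'
  exact h'

lemma contOn_matmul {p q r : ℕ} {X : ℝ → Matrix (Fin p) (Fin q) ℝ}
    {Y : ℝ → Matrix (Fin q) (Fin r) ℝ} {s : Set ℝ}
    (hX : ContinuousOn X s) (hY : ContinuousOn Y s) :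
    ContinuousOn (fun τ => X τ * Y τ) s :=
  by have := (continuous_fst.matrix_mul continuous_snd).comp_continuousOn (ContinuousOn.prodMk hX hY); exact this

lemma contOn_transpose {p q : ℕ} {X : ℝ → Matrix (Fin p) (Fin q) ℝ} {s : Set ℝ}
    (hX : ContinuousOn X s) : ContinuousOn (fun τ => (X τ)ᵀ) s :=
  (continuous_id.matrix_transpose).comp_continuousOn hX

/-- Derivative of a solution along a direction. -/
lemma fderiv_dir {m n : ℕ} {D : Set (Fin m → ℝ)}
    {M : Fin m → (Fin m → ℝ) → Matrix (Fin n) (Fin n) ℝ}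
    {F : (Fin m → ℝ) → Matrix (Fin n) (Fin n) ℝ}
    (hF : ∀ p ∈ D, DifferentiableAt ℝ F p ∧
      ∀ α, fderiv ℝ F p (Pi.single α 1) = M α p * F p)
    {p : Fin m → ℝ} (hp : p ∈ D) (v : Fin m → ℝ) :
    fderiv ℝ F p v = (∑ α, v α • M α p) * F p := by
  conv_lhs => rw [← pi_single_sum v]
  rw [map_sum]
  simp_rw [_root_.map_smul, (hF p hp).2]
  rw [Finset.sum_mul]
  simp [smul_mul_assoc]

/-- The cocycle property of the fundamental matrix. -/
lemma cocycle {m n : ℕ} {D : Set (Fin m → ℝ)} (hconv : Convex ℝ D)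
    {M : Fin m → (Fin m → ℝ) → Matrix (Fin n) (Fin n) ℝ}
    (hM : ∀ α, ContinuousOn (M α) D)
    {χ : (Fin m → ℝ) → (Fin m → ℝ) → Matrix (Fin n) (Fin n) ℝ}
    (hχ : IsFundamentalMatrix D M χ) :
    ∀ a ∈ D, ∀ b ∈ D, ∀ c ∈ D, χ c a = χ c b * χ b a := by
  intro a ha b hb c hc
  set γ : ℝ → (Fin m → ℝ) := seg b c with hγ
  have hsegD : ∀ τ ∈ Set.Icc (0:ℝ) 1, γ τ ∈ D := fun τ hτ => seg_mem_D hconv hb hc hτ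
  set A : ℝ → Matrix (Fin n) (Fin n) ℝ := fun τ => ∑ α, (c α - b α) • M α (γ τ) with hA
  have key : ∀ (F : (Fin m → ℝ) → Matrix (Fin n) (Fin n) ℝ),
      (∀ p ∈ D, DifferentiableAt ℝ F p ∧
        ∀ α, fderiv ℝ F p (Pi.single α 1) = M α p * F p) →
      ∀ τ ∈ Set.Icc (0:ℝ) 1, HasDerivAt (fun τ => F (γ τ)) (A τ * F (γ τ)) τ := by
    intro F hF τ hτ
    have hdiff := (hF (γ τ) (hsegD τ hτ)).1
    have hcomp := hdiff.hasFDerivAt.comp_hasDerivAt τ (hasDerivAt_seg b c τ)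
    have := fderiv_dir hF (hsegD τ hτ) (c - b)
    erw [this] at hcomp
    exact hcomp
  have hAcont : ContinuousOn A (Set.Icc (0:ℝ) 1) := by
    apply continuousOn_finset_sum
    intro α _
    exact ((hM α).comp (continuous_seg b c).continuousOn hsegD).const_smul (c α - b α)
  obtain ⟨C, hC⟩ := (isCompact_Icc).exists_bound_of_continuousOn hAcont
  have hC0 : (0:ℝ) ≤ C := le_trans (norm_nonneg (A 0)) (hC 0 ⟨le_refl 0, zero_le_one⟩)
  set proj : ℝ → ℝ := fun τ => max 0 (min τ 1) with hproj
  have hprojmem : ∀ τ, proj τ ∈ Set.Icc (0:ℝ) 1 :=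
    fun τ => ⟨le_max_left _ _, max_le (zero_le_one) (min_le_right _ _)⟩
  have hprojeq : ∀ τ ∈ Set.Icc (0:ℝ) 1, proj τ = τ := fun τ hτ => by
    simp [hproj, min_eq_left hτ.2, max_eq_right hτ.1]
  set v : ℝ → Matrix (Fin n) (Fin n) ℝ → Matrix (Fin n) (Fin n) ℝ :=
    fun τ X => A (proj τ) * X with hv
  set K : NNReal := ⟨n * C, by positivity⟩ with hK
  have hlip : ∀ τ, LipschitzWith K (v τ) := by
    intro τ
    apply LipschitzWith.of_dist_le_mul
    intro X Y
    rw [dist_eq_norm, dist_eq_norm, ← mul_sub]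
    calc ‖A (proj τ) * (X - Y)‖ ≤ n * ‖A (proj τ)‖ * ‖X - Y‖ := my_norm_mul_le _ _
      _ ≤ n * C * ‖X - Y‖ := by
          have := hC (proj τ) (hprojmem τ)
          gcongr
      _ = (K : ℝ) * ‖X - Y‖ := by norm_num [hK]; left; rfl
  set f : ℝ → Matrix (Fin n) (Fin n) ℝ := fun τ => χ (γ τ) a with hf
  set g : ℝ → Matrix (Fin n) (Fin n) ℝ := fun τ => χ (γ τ) b * χ b a with hg
  have hf' : ∀ τ ∈ Set.Icc (0:ℝ) 1, HasDerivAt f (A τ * f τ) τ :=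
    key _ (fun p hp => (hχ a ha).2 p hp)
  have hg' : ∀ τ ∈ Set.Icc (0:ℝ) 1, HasDerivAt g (A τ * g τ) τ := by
    intro τ hτ
    have h1 := key _ (fun p hp => (hχ b hb).2 p hp) τ hτ
    set R : Matrix (Fin n) (Fin n) ℝ →L[ℝ] Matrix (Fin n) (Fin n) ℝ :=
      LinearMap.toContinuousLinearMap (LinearMap.mulRight ℝ (χ b a)) with hR
    have h2 := R.hasFDerivAt.comp_hasDerivAt τ h1
    have hRX : ∀ X, R X = X * χ b a := fun X => rfl
    have hgeq : g = fun τ => R (χ (γ τ) b) := by funext τ; rw [hRX]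
    rw [hgeq]
    refine h2.congr_deriv ?_
    symm
    show A τ * R (χ (γ τ) b) = R (A τ * χ (γ τ) b)
    rw [hRX, hRX, mul_assoc]
  have hfc : ContinuousOn f (Set.Icc (0:ℝ) 1) :=
    fun τ hτ => ((hf' τ hτ).continuousAt).continuousWithinAt
  have hgc : ContinuousOn g (Set.Icc (0:ℝ) 1) :=
    fun τ hτ => ((hg' τ hτ).continuousAt).continuousWithinAt
  have hf'w : ∀ τ ∈ Set.Ico (0:ℝ) 1, HasDerivWithinAt f (v τ (f τ)) (Set.Ici τ) τ := by
    intro τ hτ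
    have h := (hf' τ ⟨hτ.1, hτ.2.le⟩).hasDerivWithinAt (s := Set.Ici τ)
    have : v τ (f τ) = A τ * f τ := by rw [hv]; simp only [hprojeq τ ⟨hτ.1, hτ.2.le⟩]
    rwa [this]
  have hg'w : ∀ τ ∈ Set.Ico (0:ℝ) 1, HasDerivWithinAt g (v τ (g τ)) (Set.Ici τ) τ := by
    intro τ hτ
    have h := (hg' τ ⟨hτ.1, hτ.2.le⟩).hasDerivWithinAt (s := Set.Ici τ)
    have : v τ (g τ) = A τ * g τ := by rw [hv]; simp only [hprojeq τ ⟨hτ.1, hτ.2.le⟩]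
    rwa [this]
  have ha0 : f 0 = g 0 := by
    rw [hf, hg]
    show χ (γ 0) a = χ (γ 0) b * χ b a
    rw [hγ, seg_zero, (hχ b hb).1, one_mul]
  have huniq := ODE_solution_unique_of_mem_Icc_right (v := v) (s := fun _ => Set.univ)
    (fun t _ => (hlip t).lipschitzOnWith) hfc hf'w (fun _ _ => trivial) hgc hg'w
    (fun _ _ => trivial) ha0
  simpa [hf, hg, hγ, seg_one] using huniq ⟨zero_le_one, le_refl (1:ℝ)⟩

/-- Continuity of the fundamental matrix in its second argument. -/
lemma cont_second {m n : ℕ} {D : Set (Fin m → ℝ)}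
    {M : Fin m → (Fin m → ℝ) → Matrix (Fin n) (Fin n) ℝ}
    {χ : (Fin m → ℝ) → (Fin m → ℝ) → Matrix (Fin n) (Fin n) ℝ}
    (hχ : IsFundamentalMatrix D M χ)
    (hcoc : ∀ a ∈ D, ∀ b ∈ D, ∀ c ∈ D, χ c a = χ c b * χ b a)
    {c : Fin m → ℝ} (hc : c ∈ D) : ContinuousOn (fun s => χ c s) D := by
  have h1 : ContinuousOn (fun s => χ s c) D :=
    fun p hp => (((hχ c hc).2 p hp).1.continuousAt).continuousWithinAt
  have hl : ∀ s ∈ D, χ c s * χ s c = 1 := fun s hs => by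
    rw [← hcoc c hc s hs c hc, (hχ c hc).1]
  have key : ∀ s ∈ D, χ c s = (χ s c).det⁻¹ • (χ s c).adjugate := by
    intro s hs
    have h2 : (χ s c)⁻¹ = χ c s := Matrix.inv_eq_left_inv (hl s hs)
    rw [← h2, Matrix.inv_def, Ring.inverse_eq_inv']
  have hdet : ContinuousOn (fun s => (χ s c).det) D :=
    (continuous_id.matrix_det).comp_continuousOn h1
  have hne : ∀ s ∈ D, (χ s c).det ≠ 0 := fun s hs =>
    (Matrix.isUnit_det_of_left_inverse (hl s hs)).ne_zero
  exact ContinuousOn.congr ((hdet.inv₀ hne).smul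
    ((continuous_id.matrix_adjugate).comp_continuousOn h1)) key

/-- `ℛ(a,b) = -𝒞(b,a)`, by the substitution `τ ↦ 1 - τ`. -/
lemma reach_eq_neg_ctrl {m n k : ℕ}
    (χ : (Fin m → ℝ) → (Fin m → ℝ) → Matrix (Fin n) (Fin n) ℝ)
    (N : Fin m → (Fin m → ℝ) → Matrix (Fin n) (Fin k) ℝ)
    (a b : Fin m → ℝ) : reachGramian χ N a b = -(ctrlGramian χ N b a) := by
  ext i j
  show (∫ τ in (0:ℝ)..1, ∑ α, (b α - a α) *
      (χ b (seg a b τ) * N α (seg a b τ) * (N α (seg a b τ))ᵀ * (χ b (seg a b τ))ᵀ) i j)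
    = -(∫ τ in (0:ℝ)..1, ∑ α, (a α - b α) *
      (χ b (seg b a τ) * N α (seg b a τ) * (N α (seg b a τ))ᵀ * (χ b (seg b a τ))ᵀ) i j)
  set f : ℝ → ℝ := fun τ => ∑ α, (a α - b α) *
      (χ b (seg b a τ) * N α (seg b a τ) * (N α (seg b a τ))ᵀ * (χ b (seg b a τ))ᵀ) i j with hf
  have h1 : ∀ τ : ℝ, (∑ α, (b α - a α) *
      (χ b (seg a b τ) * N α (seg a b τ) * (N α (seg a b τ))ᵀ * (χ b (seg a b τ))ᵀ) i j)
      = -(f (1 - τ)) := by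
    intro τ
    rw [hf]
    simp only [seg_symm a b τ, ← Finset.sum_neg_distrib]
    exact Finset.sum_congr rfl fun α _ => by ring
  simp only [h1]
  rw [intervalIntegral.integral_neg]
  congr 1
  have := intervalIntegral.integral_comp_sub_left (a := (0:ℝ)) (b := 1) f 1
  simpa using this

theorem gramian_relations {m n k : ℕ} (D : Set (Fin m → ℝ))
    (hD : IsOpen D) (hconv : Convex ℝ D)
    (M : Fin m → (Fin m → ℝ) → Matrix (Fin n) (Fin n) ℝ)
    (hM : ∀ α, ContDiffOn ℝ 1 (M α) D)
    (hMI : ∀ t ∈ D, ∀ α β,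
      fderiv ℝ (M α) t (Pi.single β 1) + M α t * M β t =
      fderiv ℝ (M β) t (Pi.single α 1) + M β t * M α t)
    (N : Fin m → (Fin m → ℝ) → Matrix (Fin n) (Fin k) ℝ)
    (hN : ∀ α, ContDiffOn ℝ 1 (N α) D)
    (hG : ∀ s ∈ D, ∀ α β,
      M α s * (N β s * (N β s)ᵀ) + fderiv ℝ (N α) s (Pi.single β 1) * (N α s)ᵀ
        + N α s * (fderiv ℝ (N α) s (Pi.single β 1))ᵀ
        + N β s * (N β s)ᵀ * (M α s)ᵀ =
      M β s * (N α s * (N α s)ᵀ) + fderiv ℝ (N β) s (Pi.single α 1) * (N β s)ᵀ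
        + N β s * (fderiv ℝ (N β) s (Pi.single α 1))ᵀ
        + N α s * (N α s)ᵀ * (M β s)ᵀ)
    (χ : (Fin m → ℝ) → (Fin m → ℝ) → Matrix (Fin n) (Fin n) ℝ)
    (hχ : IsFundamentalMatrix D M χ) :
    ∀ t₀ ∈ D, ∀ t ∈ D,
      reachGramian χ N t₀ t = -(ctrlGramian χ N t t₀) ∧
      χ t t₀ * ctrlGramian χ N t₀ t * (χ t t₀)ᵀ = -(ctrlGramian χ N t t₀) ∧
      ((ctrlGramian χ N t₀ t).rank = (ctrlGramian χ N t t₀).rank ∧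
        (ctrlGramian χ N t₀ t).rank = (reachGramian χ N t₀ t).rank ∧
        (ctrlGramian χ N t₀ t).rank = (reachGramian χ N t t₀).rank) := by
  intro t₀ h0 t ht
  have hMc : ∀ α, ContinuousOn (M α) D := fun α => (hM α).continuousOn
  have hNc : ∀ α, ContinuousOn (N α) D := fun α => (hN α).continuousOn
  have hcoc := cocycle hconv hMc hχ
  have hsegD : ∀ τ ∈ Set.Icc (0:ℝ) 1, seg t₀ t τ ∈ D := fun τ hτ => seg_mem_D hconv h0 ht hτ
  -- the two (matrix-valued) integrands
  set Gc : ℝ → Matrix (Fin n) (Fin n) ℝ := fun τ => ∑ α, (t α - t₀ α) •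
    (χ t₀ (seg t₀ t τ) * N α (seg t₀ t τ) * (N α (seg t₀ t τ))ᵀ * (χ t₀ (seg t₀ t τ))ᵀ) with hGc
  set Gr : ℝ → Matrix (Fin n) (Fin n) ℝ := fun τ => ∑ α, (t α - t₀ α) •
    (χ t (seg t₀ t τ) * N α (seg t₀ t τ) * (N α (seg t₀ t τ))ᵀ * (χ t (seg t₀ t τ))ᵀ) with hGr
  -- continuity and integrability of the integrands
  have hcontG : ∀ w ∈ D, ContinuousOn (fun τ => ∑ α, (t α - t₀ α) •
      (χ w (seg t₀ t τ) * N α (seg t₀ t τ) * (N α (seg t₀ t τ))ᵀ * (χ w (seg t₀ t τ))ᵀ))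
      (Set.Icc (0:ℝ) 1) := by
    intro w hw
    apply continuousOn_finset_sum
    intro α _
    have hχw : ContinuousOn (fun τ => χ w (seg t₀ t τ)) (Set.Icc (0:ℝ) 1) :=
      (cont_second hχ hcoc hw).comp (continuous_seg t₀ t).continuousOn hsegD
    have hNα : ContinuousOn (fun τ => N α (seg t₀ t τ)) (Set.Icc (0:ℝ) 1) :=
      (hNc α).comp (continuous_seg t₀ t).continuousOn hsegD
    exact (contOn_matmul (contOn_matmul (contOn_matmul hχw hNα) (contOn_transpose hNα))
      (contOn_transpose hχw)).const_smul (t α - t₀ α)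
  have hIc : IntervalIntegrable Gc volume 0 1 := by
    apply ContinuousOn.intervalIntegrable
    rw [Set.uIcc_of_le zero_le_one]
    exact hcontG t₀ h0
  have hIr : IntervalIntegrable Gr volume 0 1 := by
    apply ContinuousOn.intervalIntegrable
    rw [Set.uIcc_of_le zero_le_one]
    exact hcontG t ht
  -- the gramians as Bochner integrals
  have hC : ctrlGramian χ N t₀ t = ∫ τ in (0:ℝ)..1, Gc τ := by
    ext i j
    rw [integral_entry hIc i j]
    show (∫ τ in (0:ℝ)..1, ∑ α, (t α - t₀ α) *
      (χ t₀ (seg t₀ t τ) * N α (seg t₀ t τ) * (N α (seg t₀ t τ))ᵀ * (χ t₀ (seg t₀ t τ))ᵀ) i j)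
      = ∫ τ in (0:ℝ)..1, Gc τ i j
    refine intervalIntegral.integral_congr fun τ _ => ?_
    rw [hGc]
    simp [Matrix.sum_apply]
  have hRe : reachGramian χ N t₀ t = ∫ τ in (0:ℝ)..1, Gr τ := by
    ext i j
    rw [integral_entry hIr i j]
    show (∫ τ in (0:ℝ)..1, ∑ α, (t α - t₀ α) *
      (χ t (seg t₀ t τ) * N α (seg t₀ t τ) * (N α (seg t₀ t τ))ᵀ * (χ t (seg t₀ t τ))ᵀ) i j)
      = ∫ τ in (0:ℝ)..1, Gr τ i j
    refine intervalIntegral.integral_congr fun τ _ => ?_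
    rw [hGr]
    simp [Matrix.sum_apply]
  -- conjugation identity
  set P : Matrix (Fin n) (Fin n) ℝ := χ t t₀ with hP
  set L : Matrix (Fin n) (Fin n) ℝ →L[ℝ] Matrix (Fin n) (Fin n) ℝ :=
    LinearMap.toContinuousLinearMap
      ((LinearMap.mulRight ℝ Pᵀ).comp (LinearMap.mulLeft ℝ P)) with hL
  have hLX : ∀ X, L X = P * X * Pᵀ := fun X => rfl
  have hconj : χ t t₀ * ctrlGramian χ N t₀ t * (χ t t₀)ᵀ = reachGramian χ N t₀ t := by
    calc χ t t₀ * ctrlGramian χ N t₀ t * (χ t t₀)ᵀ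
        = L (∫ τ in (0:ℝ)..1, Gc τ) := by rw [hC, hLX]
      _ = ∫ τ in (0:ℝ)..1, L (Gc τ) := (L.intervalIntegral_comp_comm hIc).symm
      _ = ∫ τ in (0:ℝ)..1, Gr τ := by
          refine intervalIntegral.integral_congr fun τ hτ => ?_
          rw [Set.uIcc_of_le zero_le_one] at hτ
          rw [hGc, hGr, map_sum]
          refine Finset.sum_congr rfl fun α _ => ?_
          rw [_root_.map_smul, hLX]
          have hPs : χ t (seg t₀ t τ) = P * χ t₀ (seg t₀ t τ) :=
            hcoc (seg t₀ t τ) (hsegD τ hτ) t₀ h0 t ht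
          rw [hPs, Matrix.transpose_mul]
          simp only [Matrix.mul_assoc]
      _ = reachGramian χ N t₀ t := hRe.symm
  have h1 : reachGramian χ N t₀ t = -(ctrlGramian χ N t t₀) := reach_eq_neg_ctrl χ N t₀ t
  have h2 : χ t t₀ * ctrlGramian χ N t₀ t * (χ t t₀)ᵀ = -(ctrlGramian χ N t t₀) := by
    rw [hconj, h1]
  -- ranks
  have hPunit : IsUnit P.det := by
    have hl : χ t₀ t * χ t t₀ = 1 := by rw [← hcoc t₀ h0 t ht t₀ h0, (hχ t₀ h0).1]
    exact Matrix.isUnit_det_of_left_inverse hl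
  have hPTunit : IsUnit (Pᵀ).det := by rwa [Matrix.det_transpose]
  have hrk : (χ t t₀ * ctrlGramian χ N t₀ t * (χ t t₀)ᵀ).rank = (ctrlGramian χ N t₀ t).rank := by
    rw [show χ t t₀ = P from rfl,
      Matrix.rank_mul_eq_left_of_isUnit_det _ _ hPTunit,
      Matrix.rank_mul_eq_right_of_isUnit_det _ _ hPunit]
  have r1 : (ctrlGramian χ N t₀ t).rank = (ctrlGramian χ N t t₀).rank := by
    rw [← hrk, h2, rank_neg']
  have r2 : (ctrlGramian χ N t₀ t).rank = (reachGramian χ N t₀ t).rank := by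
    rw [h1, rank_neg']
    exact r1
  have r3 : (ctrlGramian χ N t₀ t).rank = (reachGramian χ N t t₀).rank := by
    rw [reach_eq_neg_ctrl χ N t t₀, rank_neg']
  exact ⟨h1, h2, r1, r2, r3⟩
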